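/- Suppose every F_{ij} ∈ {id, D} where D(x) = a·x for a fixed constant a ∈ ℝ with |a| < 1, and suppose W_{i,Out(i)} > 0 for every agent i. Then for every initial vector b₀ ∈ ℝ^n, the iterates T^t(b₀) converge to the zero vector as t → ∞ (i.e., the updating process induces the consensus (0,…,0) for every initial opinion vector). -/

import Mathlib

open Filter
open scoped Classical

/-- if `D(x) = a·x` with `|a| < 1` and every agent places positive
weight on its out-group, then the updating process converges to the zero
consensus from every initial opinion vector. -/
theorem stmt_7 (n : ℕ) (hn : 2 ≤ n)
    (W : Matrix (Fin n) (Fin n) ℝ)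
    (hW0 : ∀ i j, 0 ≤ W i j) (hW1 : ∀ i, ∑ j, W i j = 1)
    (a : ℝ) (ha : |a| < 1)
    (D : ℝ → ℝ) (hDdef : D = fun x => a * x)
    (F : Fin n → Fin n → ℝ → ℝ)
    (hF : ∀ i j, F i j = id ∨ F i j = D)
    (hOut : ∀ i, 0 < ∑ j ∈ Finset.univ.filter fun j => F i j ≠ id, W i j)
    (T : (Fin n → ℝ) → Fin n → ℝ)
    (hT : ∀ b i, T b i = ∑ j, W i j * F i j (b j)) :
    ∀ b₀ : Fin n → ℝ, Tendsto (fun t => T^[t] b₀) atTop (nhds 0) := by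
  intro b₀
  have ha0 : 0 ≤ |a| := abs_nonneg a
  have hne : (Finset.univ : Finset (Fin n)).Nonempty :=
    ⟨⟨0, by omega⟩, Finset.mem_univ _⟩
  set w : Fin n → ℝ := fun i => ∑ j ∈ Finset.univ.filter fun j => F i j ≠ id, W i j with hw
  set ε := Finset.univ.inf' hne w with hεdef
  have hε0 : 0 < ε := (Finset.lt_inf'_iff hne).2 fun i _ => hOut i
  have hεle : ∀ i, ε ≤ w i := fun i => Finset.inf'_le _ (Finset.mem_univ i)
  have hwle1 : ∀ i, w i ≤ 1 := by
    intro i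
    rw [← hW1 i]
    exact Finset.sum_le_sum_of_subset_of_nonneg (Finset.filter_subset _ _)
      (fun j _ _ => hW0 i j)
  have hε1 : ε ≤ 1 := le_trans (hεle ⟨0, by omega⟩) (hwle1 _)
  set c := 1 - (1 - |a|) * ε with hcdef
  have hc0 : 0 ≤ c := by nlinarith
  have hc1 : c < 1 := by nlinarith
  have key : ∀ b : Fin n → ℝ, ‖T b‖ ≤ c * ‖b‖ := by
    intro b
    have hb0 : (0:ℝ) ≤ ‖b‖ := norm_nonneg b
    refine (pi_norm_le_iff_of_nonneg (by positivity)).2 fun i => ?_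
    rw [Real.norm_eq_abs, hT]
    have hbj : ∀ j, |b j| ≤ ‖b‖ := by
      intro j
      simpa [Real.norm_eq_abs] using norm_le_pi_norm b j
    have h1 : |∑ j, W i j * F i j (b j)| ≤ ∑ j, W i j * |F i j (b j)| := by
      calc |∑ j, W i j * F i j (b j)| ≤ ∑ j, |W i j * F i j (b j)| :=
            Finset.abs_sum_le_sum_abs _ _
        _ = ∑ j, W i j * |F i j (b j)| := by
            refine Finset.sum_congr rfl fun j _ => ?_
            rw [abs_mul, abs_of_nonneg (hW0 i j)]
    have hsplit : ∑ j, W i j * |F i j (b j)|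
        = (∑ j ∈ Finset.univ.filter fun j => F i j ≠ id, W i j * |F i j (b j)|)
          + ∑ j ∈ Finset.univ.filter fun j => ¬ F i j ≠ id, W i j * |F i j (b j)| :=
      (Finset.sum_filter_add_sum_filter_not _ _ _).symm
    have h2 : (∑ j ∈ Finset.univ.filter fun j => F i j ≠ id, W i j * |F i j (b j)|)
        ≤ ∑ j ∈ Finset.univ.filter fun j => F i j ≠ id, W i j * (|a| * ‖b‖) := by
      refine Finset.sum_le_sum fun j hj => ?_
      have hjid : F i j ≠ id := (Finset.mem_filter.1 hj).2
      have hD : F i j = D := (hF i j).resolve_left hjid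
      have : |F i j (b j)| ≤ |a| * ‖b‖ := by
        rw [hD, hDdef]
        simp only [abs_mul]
        exact mul_le_mul_of_nonneg_left (hbj j) ha0
      exact mul_le_mul_of_nonneg_left this (hW0 i j)
    have h3 : (∑ j ∈ Finset.univ.filter fun j => ¬ F i j ≠ id, W i j * |F i j (b j)|)
        ≤ ∑ j ∈ Finset.univ.filter fun j => ¬ F i j ≠ id, W i j * ‖b‖ := by
      refine Finset.sum_le_sum fun j hj => ?_
      have hjid : F i j = id := not_not.1 (Finset.mem_filter.1 hj).2
      rw [hjid]
      exact mul_le_mul_of_nonneg_left (hbj j) (hW0 i j)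
    have hsum2 : (∑ j ∈ Finset.univ.filter fun j => F i j ≠ id, W i j * (|a| * ‖b‖))
        = w i * (|a| * ‖b‖) := by rw [hw, ← Finset.sum_mul]
    have hsum3 : (∑ j ∈ Finset.univ.filter fun j => ¬ F i j ≠ id, W i j * ‖b‖)
        = (1 - w i) * ‖b‖ := by
      rw [← Finset.sum_mul]
      congr 1
      have := Finset.sum_filter_add_sum_filter_not Finset.univ
        (fun j => F i j ≠ id) (fun j => W i j)
      rw [hW1 i] at this
      rw [hw]
      linarith
    have hwi : ε ≤ w i := hεle i
    have hwi1 : w i ≤ 1 := hwle1 i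
    calc |∑ j, W i j * F i j (b j)| ≤ ∑ j, W i j * |F i j (b j)| := h1
      _ ≤ w i * (|a| * ‖b‖) + (1 - w i) * ‖b‖ := by
          rw [hsplit]; rw [← hsum2, ← hsum3]; exact add_le_add h2 h3
      _ ≤ c * ‖b‖ := by
          rw [hcdef]
          nlinarith [mul_nonneg (mul_nonneg (sub_nonneg.2 hwi) (by linarith : (0:ℝ) ≤ 1 - |a|)) hb0]
  have bound : ∀ t, ‖T^[t] b₀‖ ≤ c ^ t * ‖b₀‖ := by
    intro t
    induction t with
    | zero => simp
    | succ t ih =>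
      rw [Function.iterate_succ_apply']
      calc ‖T (T^[t] b₀)‖ ≤ c * ‖T^[t] b₀‖ := key _
        _ ≤ c * (c ^ t * ‖b₀‖) := mul_le_mul_of_nonneg_left ih hc0
        _ = c ^ (t + 1) * ‖b₀‖ := by ring
  rw [tendsto_zero_iff_norm_tendsto_zero]
  have hlim : Tendsto (fun t => c ^ t * ‖b₀‖) atTop (nhds 0) := by
    simpa using (tendsto_pow_atTop_nhds_zero_of_lt_one hc0 hc1).mul_const ‖b₀‖
  exact squeeze_zero (fun t => norm_nonneg _) bound hlim
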